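/- arXiv:1808.09420 — 2 statements merged into one kernel-verified Lean document; each statement's English description precedes it below -/
import Mathlib

section
/- Let Φ ∈ C²(Q_b) satisfy ΔΦ + |∇Φ|² = V_δ on Q_b with 0 ≤ V_δ ≤ 2λ² a.e., where b = 1 + 1/F(λ), d̃ = 1 + 3/(4F(λ)), and 1 ≤ F(λ) ≤ λ. Then there is an absolute constant C such that ∫_{Q_{d̃}} |∇Φ|² ≤ C λ². -/
open MeasureTheory

noncomputable def pdx (f : ℝ × ℝ → ℝ) (p : ℝ × ℝ) : ℝ := deriv (fun x => f (x, p.2)) p.1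
noncomputable def pdy (f : ℝ × ℝ → ℝ) (p : ℝ × ℝ) : ℝ := deriv (fun y => f (p.1, y)) p.2
noncomputable def lap (f : ℝ × ℝ → ℝ) (p : ℝ × ℝ) : ℝ := pdx (pdx f) p + pdy (pdy f) p

/-- The square `Q_r = [-r,r]²`. -/
def Qsq (r : ℝ) : Set (ℝ × ℝ) := Set.Icc (-r) r ×ˢ Set.Icc (-r) r

section Aux
open Set


lemma exists_M : ∃ M : ℝ, 1 ≤ M ∧ ∀ x, |deriv Real.smoothTransition x| ≤ M := by
  have hcd : Continuous (deriv Real.smoothTransition) :=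
    (Real.smoothTransition.contDiff (n := 1)).continuous_deriv le_rfl
  obtain ⟨M0, hM0⟩ := (isCompact_Icc (a := (0:ℝ)) (b := 1)).exists_bound_of_continuousOn
    hcd.continuousOn
  refine ⟨max M0 1, le_max_right _ _, fun x => ?_⟩
  rcases lt_or_ge x 0 with hx | hx
  · have : deriv Real.smoothTransition x = 0 := by
      have : Real.smoothTransition =ᶠ[nhds x] fun _ => (0:ℝ) :=
        Filter.eventuallyEq_of_mem (Iio_mem_nhds hx) fun y hy =>
          Real.smoothTransition.zero_of_nonpos (le_of_lt hy)
      rw [this.deriv_eq, deriv_const]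
    simp [this]
  rcases le_or_gt x 1 with hx1 | hx1
  · exact le_trans (by simpa using hM0 x ⟨hx, hx1⟩) (le_max_left _ _)
  · have : deriv Real.smoothTransition x = 0 := by
      have : Real.smoothTransition =ᶠ[nhds x] fun _ => (1:ℝ) :=
        Filter.eventuallyEq_of_mem (Ioi_mem_nhds hx1) fun y hy =>
          Real.smoothTransition.one_of_one_le (le_of_lt hy)
      rw [this.deriv_eq, deriv_const]
    simp [this]

noncomputable def cut (s : ℝ) (x : ℝ) : ℝ :=
  Real.smoothTransition (s * ((1 + 7/s) - x)) * Real.smoothTransition (s * ((1 + 7/s) + x))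

noncomputable def cutd (s : ℝ) (x : ℝ) : ℝ :=
  s * (Real.smoothTransition (s * ((1 + 7/s) - x)) *
        deriv Real.smoothTransition (s * ((1 + 7/s) + x)) -
      deriv Real.smoothTransition (s * ((1 + 7/s) - x)) *
        Real.smoothTransition (s * ((1 + 7/s) + x)))

lemma cut_nonneg (s x : ℝ) : 0 ≤ cut s x :=
  mul_nonneg (Real.smoothTransition.nonneg _) (Real.smoothTransition.nonneg _)

lemma cut_le_one (s x : ℝ) : cut s x ≤ 1 :=
  mul_le_one₀ (Real.smoothTransition.le_one _) (Real.smoothTransition.nonneg _)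
    (Real.smoothTransition.le_one _)

lemma cut_eq_one {s x : ℝ} (hs : 0 < s) (h : |x| ≤ 1 + 6/s) : cut s x = 1 := by
  obtain ⟨h1, h2⟩ := abs_le.1 h
  have key : (7:ℝ)/s - 6/s = 1/s := by ring
  have e1 : (1:ℝ) ≤ s * ((1 + 7/s) - x) :=
    (div_le_iff₀' hs).mp (by linarith)
  have e2 : (1:ℝ) ≤ s * ((1 + 7/s) + x) :=
    (div_le_iff₀' hs).mp (by linarith)
  rw [cut, Real.smoothTransition.one_of_one_le e1,
    Real.smoothTransition.one_of_one_le e2, mul_one]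

lemma cut_eq_zero {s x : ℝ} (hs : 0 < s) (h : 1 + 7/s ≤ |x|) : cut s x = 0 := by
  rcases le_abs.mp h with h' | h'
  · have : s * ((1 + 7/s) - x) ≤ 0 := mul_nonpos_iff.mpr (Or.inl ⟨hs.le, by linarith⟩)
    rw [cut, Real.smoothTransition.zero_of_nonpos this, zero_mul]
  · have : s * ((1 + 7/s) + x) ≤ 0 := mul_nonpos_iff.mpr (Or.inl ⟨hs.le, by linarith⟩)
    rw [cut, Real.smoothTransition.zero_of_nonpos this, mul_zero]

lemma cut_hasDerivAt (s x : ℝ) : HasDerivAt (cut s) (cutd s x) x := by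
  have hT : ∀ y : ℝ, HasDerivAt Real.smoothTransition (deriv Real.smoothTransition y) y :=
    fun y => ((Real.smoothTransition.contDiff (n := 1)).differentiable (by norm_num) _).hasDerivAt
  have h1 : HasDerivAt (fun x : ℝ => s * ((1 + 7/s) - x)) (-s) x := by
    simpa using (((hasDerivAt_id x).const_sub (1 + 7/s)).const_mul s)
  have h2 : HasDerivAt (fun x : ℝ => s * ((1 + 7/s) + x)) s x := by
    simpa using (((hasDerivAt_id x).const_add (1 + 7/s)).const_mul s)
  have hA := (hT (s * ((1 + 7/s) - x))).comp x h1
  have hB := (hT (s * ((1 + 7/s) + x))).comp x h2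
  have := hA.mul hB
  exact this.congr_deriv (by
    simp only [Function.comp]
    rw [cutd]; ring)

lemma cutd_bound {M s : ℝ} (x : ℝ) (hM : ∀ y, |deriv Real.smoothTransition y| ≤ M)
    (hM1 : 1 ≤ M) (hs : 0 ≤ s) : |cutd s x| ≤ 2 * M * s := by
  rw [cutd, abs_mul, abs_of_nonneg hs]
  set a := Real.smoothTransition (s * ((1 + 7/s) - x)) with ha
  set b := deriv Real.smoothTransition (s * ((1 + 7/s) + x)) with hb
  set c := deriv Real.smoothTransition (s * ((1 + 7/s) - x)) with hc
  set d := Real.smoothTransition (s * ((1 + 7/s) + x)) with hd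
  have b1 : |a| ≤ 1 := abs_le.mpr ⟨by linarith [Real.smoothTransition.nonneg (s * ((1 + 7/s) - x))],
    Real.smoothTransition.le_one _⟩
  have b2 : |d| ≤ 1 := abs_le.mpr ⟨by linarith [Real.smoothTransition.nonneg (s * ((1 + 7/s) + x))],
    Real.smoothTransition.le_one _⟩
  have c1 := hM (s * ((1 + 7/s) + x))
  have c2 := hM (s * ((1 + 7/s) - x))
  have habs : |a * b - c * d| ≤ 2 * M := by
    calc |a * b - c * d| ≤ |a * b| + |c * d| := abs_sub _ _
      _ = |a| * |b| + |c| * |d| := by rw [abs_mul, abs_mul]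
      _ ≤ 1 * M + M * 1 := by
          gcongr <;> first | exact b1 | exact b2 | exact c1 | exact c2 |
            positivity
      _ = 2 * M := by ring
  calc s * |a * b - c * d| ≤ s * (2 * M) := by
        exact mul_le_mul_of_nonneg_left habs hs
    _ = 2 * M * s := by ring

lemma cut_continuous (s : ℝ) : Continuous (cut s) :=
  (Real.smoothTransition.continuous.comp (by continuity)).mul
    (Real.smoothTransition.continuous.comp (by continuity))

lemma cutd_continuous (s : ℝ) : Continuous (cutd s) := by
  have hcd : Continuous (deriv Real.smoothTransition) :=
    (Real.smoothTransition.contDiff (n := 1)).continuous_deriv le_rfl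
  exact continuous_const.mul
    (((Real.smoothTransition.continuous.comp (by continuity)).mul
        (hcd.comp (by continuity))).sub
      ((hcd.comp (by continuity)).mul
        (Real.smoothTransition.continuous.comp (by continuity))))


lemma hasDerivAt_slice_x {f : ℝ × ℝ → ℝ} {p : ℝ × ℝ} (h : DifferentiableAt ℝ f p) :
    HasDerivAt (fun x => f (x, p.2)) (fderiv ℝ f p (1, 0)) p.1 := by
  have hι : HasDerivAt (fun x : ℝ => (x, p.2)) ((1:ℝ), (0:ℝ)) p.1 :=
    (hasDerivAt_id p.1).prodMk (hasDerivAt_const p.1 p.2)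
  exact h.hasFDerivAt.comp_hasDerivAt p.1 hι

lemma hasDerivAt_slice_y {f : ℝ × ℝ → ℝ} {p : ℝ × ℝ} (h : DifferentiableAt ℝ f p) :
    HasDerivAt (fun y => f (p.1, y)) (fderiv ℝ f p (0, 1)) p.2 := by
  have hι : HasDerivAt (fun y : ℝ => (p.1, y)) ((0:ℝ), (1:ℝ)) p.2 :=
    (hasDerivAt_const p.2 p.1).prodMk (hasDerivAt_id p.2)
  exact h.hasFDerivAt.comp_hasDerivAt p.2 hι

lemma pdx_eq {f : ℝ × ℝ → ℝ} {p : ℝ × ℝ} (h : DifferentiableAt ℝ f p) :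
    pdx f p = fderiv ℝ f p (1, 0) := (hasDerivAt_slice_x h).deriv

lemma pdy_eq {f : ℝ × ℝ → ℝ} {p : ℝ × ℝ} (h : DifferentiableAt ℝ f p) :
    pdy f p = fderiv ℝ f p (0, 1) := (hasDerivAt_slice_y h).deriv


noncomputable def Dth (s : ℝ) (p : ℝ × ℝ) : ℝ × ℝ →L[ℝ] ℝ :=
  (cutd s p.1 * cut s p.2) • ContinuousLinearMap.fst ℝ ℝ ℝ +
    (cut s p.1 * cutd s p.2) • ContinuousLinearMap.snd ℝ ℝ ℝ

lemma theta_hasFDerivAt (s : ℝ) (p : ℝ × ℝ) :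
    HasFDerivAt (fun q : ℝ × ℝ => cut s q.1 * cut s q.2) (Dth s p) p := by
  have h1 : HasFDerivAt (fun q : ℝ × ℝ => cut s q.1)
      (cutd s p.1 • ContinuousLinearMap.fst ℝ ℝ ℝ) p :=
    (cut_hasDerivAt s p.1).comp_hasFDerivAt p (hasFDerivAt_fst)
  have h2 : HasFDerivAt (fun q : ℝ × ℝ => cut s q.2)
      (cutd s p.2 • ContinuousLinearMap.snd ℝ ℝ ℝ) p :=
    (cut_hasDerivAt s p.2).comp_hasFDerivAt p (hasFDerivAt_snd)
  have := h1.mul h2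
  exact this.congr_fderiv (by
    refine ContinuousLinearMap.ext fun q => ?_
    simp [Dth]
    ring)

example (s : ℝ) (p : ℝ × ℝ) : Dth s p (1, 0) = cutd s p.1 * cut s p.2 := by
  simp [Dth]

example (s : ℝ) (p : ℝ × ℝ) : Dth s p (0, 1) = cut s p.1 * cutd s p.2 := by
  simp [Dth]

end Aux

open Set in
set_option maxHeartbeats 1000000 in
theorem gradient_L2_estimate :
    ∃ C : ℝ, 0 < C ∧
      ∀ (lam Flam : ℝ) (Φ V : ℝ × ℝ → ℝ),
        1 ≤ lam → 1 ≤ Flam → Flam ≤ lam →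
        ContDiffOn ℝ 2 Φ (Qsq (1 + 1 / Flam)) →
        (∀ p ∈ Qsq (1 + 1 / Flam),
          lap Φ p + ((pdx Φ p) ^ 2 + (pdy Φ p) ^ 2) = V p) →
        (∀ᵐ p : ℝ × ℝ ∂volume, 0 ≤ V p ∧ V p ≤ 2 * lam ^ 2) →
        ∫ p in Qsq (1 + 3 / (4 * Flam)), ((pdx Φ p) ^ 2 + (pdy Φ p) ^ 2)
          ≤ C * lam ^ 2 := by
  obtain ⟨M, hM1, hM⟩ := exists_M
  refine ⟨40000 * M ^ 2, by positivity, ?_⟩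
  intro lam Flam Φ V hlam hF hFl hΦ hPDE hV
  have hF0 : (0:ℝ) < Flam := by linarith
  set s : ℝ := 8 * Flam with hs_def
  have hs0 : (0:ℝ) < s := by positivity
  set r : ℝ := 1 + 15 / (16 * Flam) with hr_def
  have hr1 : (1:ℝ) ≤ r := by
    have : 0 < 15 / (16 * Flam) := by positivity
    simp only [hr_def]; linarith
  have hr2 : r ≤ 2 := by
    have h16 : 15 / (16 * Flam) ≤ 15 / 16 := by
      apply div_le_div_of_nonneg_left (by norm_num) (by norm_num) (by linarith)
    simp only [hr_def]; linarith
  have hrb : r < 1 + 1 / Flam := by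
    have : 15 / (16 * Flam) < 1 / Flam := by
      rw [div_lt_div_iff₀ (by positivity) hF0]; ring_nf; nlinarith
    simp only [hr_def]; linarith
  -- the support radius of the cutoff
  have hsupp : 1 + 7 / s ≤ r := by
    have : 7 / s = 7 / (8 * Flam) := by rw [hs_def]
    have h2 : 7 / (8 * Flam) ≤ 15 / (16 * Flam) := by
      rw [div_le_div_iff₀ (by positivity) (by positivity)]; nlinarith
    simp only [hr_def]; linarith
  -- the "equals one" radius
  have hone : 1 + 3 / (4 * Flam) = 1 + 6 / s := by
    rw [hs_def]; field_simp; ring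
  -- sets
  set b : ℝ := 1 + 1 / Flam with hb_def
  set U : Set (ℝ × ℝ) := Ioo (-b) b ×ˢ Ioo (-b) b with hU_def
  have hUopen : IsOpen U := isOpen_Ioo.prod isOpen_Ioo
  have hUsub : U ⊆ Qsq b := prod_mono Ioo_subset_Icc_self Ioo_subset_Icc_self
  set R : Set (ℝ × ℝ) := Icc ((-r, -r) : ℝ × ℝ) (r, r) with hR_def
  have hRU : R ⊆ U := by
    intro p hp
    rw [hR_def, ← Icc_prod_Icc] at hp
    obtain ⟨⟨h1, h2⟩, h3, h4⟩ := hp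
    exact ⟨⟨by linarith, by linarith⟩, ⟨by linarith, by linarith⟩⟩
  have hΦU : ContDiffOn ℝ 2 Φ U := hΦ.mono hUsub
  have hΦdiff : ∀ q ∈ U, DifferentiableAt ℝ Φ q := fun q hq =>
    (hΦU.differentiableOn (by norm_num)).differentiableAt (hUopen.mem_nhds hq)
  have hA : ContDiffOn ℝ 1 (fun q => fderiv ℝ Φ q) U := hΦU.fderiv_of_isOpen hUopen (by norm_num)
  set P : ℝ × ℝ → ℝ := fun q => fderiv ℝ Φ q (1, 0) with hP_def
  set Q2 : ℝ × ℝ → ℝ := fun q => fderiv ℝ Φ q (0, 1) with hQ2_def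
  have hPc1 : ContDiffOn ℝ 1 P U :=
    (ContinuousLinearMap.apply ℝ ℝ ((1:ℝ), (0:ℝ))).contDiff.comp_contDiffOn hA
  have hQc1 : ContDiffOn ℝ 1 Q2 U :=
    (ContinuousLinearMap.apply ℝ ℝ ((0:ℝ), (1:ℝ))).contDiff.comp_contDiffOn hA
  have hPd : ∀ q ∈ U, DifferentiableAt ℝ P q := fun q hq =>
    (hPc1.differentiableOn (by norm_num)).differentiableAt (hUopen.mem_nhds hq)
  have hQd : ∀ q ∈ U, DifferentiableAt ℝ Q2 q := fun q hq =>
    (hQc1.differentiableOn (by norm_num)).differentiableAt (hUopen.mem_nhds hq)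
  have hpdx : ∀ q ∈ U, pdx Φ q = P q := fun q hq => pdx_eq (hΦdiff q hq)
  have hpdy : ∀ q ∈ U, pdy Φ q = Q2 q := fun q hq => pdy_eq (hΦdiff q hq)
  have hlapx : ∀ q ∈ U, pdx (pdx Φ) q = fderiv ℝ P q (1, 0) := by
    intro q hq
    have hop : IsOpen {x : ℝ | (x, q.2) ∈ U} := hUopen.preimage (continuous_id.prodMk continuous_const)
    have hev : (fun x => pdx Φ (x, q.2)) =ᶠ[nhds q.1] fun x => P (x, q.2) :=
      Filter.eventuallyEq_of_mem (hop.mem_nhds (by simpa using hq)) fun x hx => hpdx _ hx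
    show deriv (fun x => pdx Φ (x, q.2)) q.1 = _
    rw [hev.deriv_eq]
    exact (hasDerivAt_slice_x (hPd q hq)).deriv
  have hlapy : ∀ q ∈ U, pdy (pdy Φ) q = fderiv ℝ Q2 q (0, 1) := by
    intro q hq
    have hop : IsOpen {y : ℝ | (q.1, y) ∈ U} := hUopen.preimage (continuous_const.prodMk continuous_id)
    have hev : (fun y => pdy Φ (q.1, y)) =ᶠ[nhds q.2] fun y => Q2 (q.1, y) :=
      Filter.eventuallyEq_of_mem (hop.mem_nhds (by simpa using hq)) fun y hy => hpdy _ hy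
    show deriv (fun y => pdy Φ (q.1, y)) q.2 = _
    rw [hev.deriv_eq]
    exact (hasDerivAt_slice_y (hQd q hq)).deriv
  have hVeq : ∀ q ∈ U, V q =
      (fderiv ℝ P q (1, 0) + fderiv ℝ Q2 q (0, 1)) + (P q ^ 2 + Q2 q ^ 2) := by
    intro q hq
    have h0 := hPDE q (hUsub hq)
    rw [lap, hlapx q hq, hlapy q hq, hpdx q hq, hpdy q hq] at h0
    linarith
  -- cutoff
  set θ : ℝ × ℝ → ℝ := fun q => cut s q.1 * cut s q.2 with hθ_def
  set θx : ℝ × ℝ → ℝ := fun q => cutd s q.1 * cut s q.2 with hθx_def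
  set θy : ℝ × ℝ → ℝ := fun q => cut s q.1 * cutd s q.2 with hθy_def
  have hcutabs : ∀ x, |cut s x| ≤ 1 := fun x =>
    abs_le.mpr ⟨by linarith [cut_nonneg s x], cut_le_one s x⟩
  have hθ0 : ∀ q, 0 ≤ θ q := fun q => mul_nonneg (cut_nonneg _ _) (cut_nonneg _ _)
  have hθ1 : ∀ q, θ q ≤ 1 := fun q =>
    mul_le_one₀ (cut_le_one _ _) (cut_nonneg _ _) (cut_le_one _ _)
  have hθxb : ∀ q, |θx q| ≤ 2 * M * s := fun q => by
    rw [hθx_def]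
    calc |cutd s q.1 * cut s q.2| = |cutd s q.1| * |cut s q.2| := abs_mul _ _
      _ ≤ (2 * M * s) * 1 :=
          mul_le_mul (cutd_bound _ hM hM1 hs0.le) (hcutabs _) (abs_nonneg _) (by positivity)
      _ = 2 * M * s := mul_one _
  have hθyb : ∀ q, |θy q| ≤ 2 * M * s := fun q => by
    rw [hθy_def]
    calc |cut s q.1 * cutd s q.2| = |cut s q.1| * |cutd s q.2| := abs_mul _ _
      _ ≤ 1 * (2 * M * s) :=
          mul_le_mul (hcutabs _) (cutd_bound _ hM hM1 hs0.le) (abs_nonneg _) (by positivity)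
      _ = 2 * M * s := one_mul _
  have hθcont : Continuous θ :=
    ((cut_continuous s).comp continuous_fst).mul ((cut_continuous s).comp continuous_snd)
  have hθxcont : Continuous θx :=
    ((cutd_continuous s).comp continuous_fst).mul ((cut_continuous s).comp continuous_snd)
  have hθycont : Continuous θy :=
    ((cut_continuous s).comp continuous_fst).mul ((cutd_continuous s).comp continuous_snd)
  -- vector fields
  set f : ℝ × ℝ → ℝ := fun q => (θ q * θ q) * P q with hf_def
  set g : ℝ × ℝ → ℝ := fun q => (θ q * θ q) * Q2 q with hg_def
  set f' : (ℝ × ℝ) → (ℝ × ℝ) →L[ℝ] ℝ := fun p =>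
    (θ p * θ p) • fderiv ℝ P p + P p • (θ p • Dth s p + θ p • Dth s p) with hf'_def
  set g' : (ℝ × ℝ) → (ℝ × ℝ) →L[ℝ] ℝ := fun p =>
    (θ p * θ p) • fderiv ℝ Q2 p + Q2 p • (θ p • Dth s p + θ p • Dth s p) with hg'_def
  have hθ2 : ∀ p, HasFDerivAt (fun q => θ q * θ q) (θ p • Dth s p + θ p • Dth s p) p :=
    fun p => (theta_hasFDerivAt s p).mul (theta_hasFDerivAt s p)
  have hdf : ∀ p ∈ U, HasFDerivAt f (f' p) p := fun p hp =>
    (hθ2 p).mul ((hPd p hp).hasFDerivAt)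
  have hdg : ∀ p ∈ U, HasFDerivAt g (g' p) p := fun p hp =>
    (hθ2 p).mul ((hQd p hp).hasFDerivAt)
  have hDth1 : ∀ p, Dth s p (1, 0) = θx p := by
    intro p; rw [hθx_def]; simp [Dth]
  have hDth2 : ∀ p, Dth s p (0, 1) = θy p := by
    intro p; rw [hθy_def]; simp [Dth]
  have hfeval : ∀ p, f' p (1, 0) =
      (θ p * θ p) * fderiv ℝ P p (1, 0) + P p * (2 * θ p * θx p) := by
    intro p
    simp only [hf'_def, ContinuousLinearMap.add_apply, ContinuousLinearMap.smul_apply,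
      hDth1, smul_eq_mul]
    ring
  have hgeval : ∀ p, g' p (0, 1) =
      (θ p * θ p) * fderiv ℝ Q2 p (0, 1) + Q2 p * (2 * θ p * θy p) := by
    intro p
    simp only [hg'_def, ContinuousLinearMap.add_apply, ContinuousLinearMap.smul_apply,
      hDth2, smul_eq_mul]
    ring
  -- continuity facts
  have hPcont : ContinuousOn P U := hPc1.continuousOn
  have hQcont : ContinuousOn Q2 U := hQc1.continuousOn
  have hfPcont : ContinuousOn (fun q => fderiv ℝ P q (1, 0)) U :=
    (ContinuousLinearMap.apply ℝ ℝ ((1:ℝ), (0:ℝ))).continuous.comp_continuousOn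
      (hPc1.continuousOn_fderiv_of_isOpen hUopen le_rfl)
  have hfQcont : ContinuousOn (fun q => fderiv ℝ Q2 q (0, 1)) U :=
    (ContinuousLinearMap.apply ℝ ℝ ((0:ℝ), (1:ℝ))).continuous.comp_continuousOn
      (hQc1.continuousOn_fderiv_of_isOpen hUopen le_rfl)
  -- divergence theorem
  have hle : ((-r, -r) : ℝ × ℝ) ≤ (r, r) := ⟨by simp; linarith, by simp; linarith⟩
  have hIoosub : (Ioo (-r) r ×ˢ Ioo (-r) r : Set (ℝ × ℝ)) \ (∅ : Set (ℝ × ℝ)) ⊆ U := by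
    intro p hp
    refine hRU ?_
    rw [hR_def, ← Icc_prod_Icc]
    exact ⟨Ioo_subset_Icc_self hp.1.1, Ioo_subset_Icc_self hp.1.2⟩
  have Hcf : ContinuousOn f R := ((hθcont.mul hθcont).continuousOn.mul (hPcont.mono hRU))
  have Hcg : ContinuousOn g R := ((hθcont.mul hθcont).continuousOn.mul (hQcont.mono hRU))
  have Hicont : ContinuousOn (fun p => f' p (1, 0) + g' p (0, 1)) R := by
    have hbig : ContinuousOn (fun p =>
        ((θ p * θ p) * fderiv ℝ P p (1, 0) + P p * (2 * θ p * θx p)) +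
          ((θ p * θ p) * fderiv ℝ Q2 p (0, 1) + Q2 p * (2 * θ p * θy p))) R := by
      apply ContinuousOn.add
      · exact ((hθcont.mul hθcont).continuousOn.mul (hfPcont.mono hRU)).add
          ((hPcont.mono hRU).mul ((continuous_const.mul hθcont).mul hθxcont).continuousOn)
      · exact ((hθcont.mul hθcont).continuousOn.mul (hfQcont.mono hRU)).add
          ((hQcont.mono hRU).mul ((continuous_const.mul hθcont).mul hθycont).continuousOn)
    exact hbig.congr fun p hp => by rw [hfeval, hgeval]
  have Hi : IntegrableOn (fun p => f' p (1, 0) + g' p (0, 1)) R volume :=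
    Hicont.integrableOn_compact isCompact_Icc
  have Hdiv := integral_divergence_prod_Icc_of_hasFDerivAt_off_countable_of_le f g f' g'
    (-r, -r) (r, r) hle ∅ countable_empty Hcf Hcg
    (fun p hp => hdf p (hIoosub hp)) (fun p hp => hdg p (hIoosub hp)) Hi
  have hcut_r : cut s r = 0 := cut_eq_zero hs0 (by rw [abs_of_nonneg (by linarith)]; exact hsupp)
  have hcut_nr : cut s (-r) = 0 :=
    cut_eq_zero hs0 (by rw [abs_neg, abs_of_nonneg (by linarith)]; exact hsupp)
  have Hdiv0 : (∫ p in R, (f' p (1, 0) + g' p (0, 1))) = 0 := by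
    rw [hR_def, Hdiv]
    have e1 : (∫ x in (-r)..r, g (x, r)) = 0 := by simp [hg_def, hθ_def, hcut_r]
    have e2 : (∫ x in (-r)..r, g (x, -r)) = 0 := by simp [hg_def, hθ_def, hcut_nr]
    have e3 : (∫ y in (-r)..r, f (r, y)) = 0 := by simp [hf_def, hθ_def, hcut_r]
    have e4 : (∫ y in (-r)..r, f (-r, y)) = 0 := by simp [hf_def, hθ_def, hcut_nr]
    rw [e1, e2, e3, e4]
    ring
  -- the integrands
  set E1 : ℝ × ℝ → ℝ := fun p => (θ p * θ p) * (P p ^ 2 + Q2 p ^ 2) with hE1_def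
  set E2 : ℝ × ℝ → ℝ := fun p => (θ p * θ p) * V p with hE2_def
  set E3 : ℝ × ℝ → ℝ := fun p => 2 * θ p * (θx p * P p + θy p * Q2 p) with hE3_def
  set E4 : ℝ × ℝ → ℝ := fun p => θx p ^ 2 + θy p ^ 2 with hE4_def
  have hRmeas : MeasurableSet R := measurableSet_Icc
  have hident : ∀ p ∈ R, f' p (1, 0) + g' p (0, 1) = E2 p - E1 p + E3 p := by
    intro p hp
    rw [hfeval, hgeval]
    show _ = (θ p * θ p) * V p - (θ p * θ p) * (P p ^ 2 + Q2 p ^ 2) +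
      2 * θ p * (θx p * P p + θy p * Q2 p)
    rw [hVeq p (hRU hp)]
    ring
  -- integrability
  have hE1cont : ContinuousOn E1 R := (hθcont.mul hθcont).continuousOn.mul
    (((hPcont.mono hRU).pow 2).add ((hQcont.mono hRU).pow 2))
  have hE1int : IntegrableOn E1 R volume := hE1cont.integrableOn_compact isCompact_Icc
  have hE3cont : ContinuousOn E3 R := (continuous_const.mul hθcont).continuousOn.mul
    ((hθxcont.continuousOn.mul (hPcont.mono hRU)).add
      (hθycont.continuousOn.mul (hQcont.mono hRU)))
  have hE3int : IntegrableOn E3 R volume := hE3cont.integrableOn_compact isCompact_Icc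
  have hE4int : IntegrableOn E4 R volume :=
    ((hθxcont.pow 2).add (hθycont.pow 2)).continuousOn.integrableOn_compact isCompact_Icc
  have hE2int : IntegrableOn E2 R volume := by
    refine MeasureTheory.IntegrableOn.congr_fun
      (((Hi.add hE1int).sub hE3int : IntegrableOn
        (fun p => ((f' p (1, 0) + g' p (0, 1)) + E1 p) - E3 p) R volume))
      (fun p hp => ?_) hRmeas
    show ((f' p (1, 0) + g' p (0, 1)) + E1 p) - E3 p = E2 p
    rw [hident p hp]
    ring
  have hsplit : (∫ p in R, E1 p) = (∫ p in R, E2 p) + ∫ p in R, E3 p := by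
    have h0 : (∫ p in R, (E2 p - E1 p + E3 p)) = 0 := by
      rw [← Hdiv0]
      exact setIntegral_congr_fun hRmeas fun p hp => (hident p hp).symm
    have i1 : IntegrableOn (fun p => E2 p - E1 p) R volume := hE2int.sub hE1int
    have h1 : (∫ p in R, (E2 p - E1 p + E3 p)) =
        ((∫ p in R, E2 p) - ∫ p in R, E1 p) + ∫ p in R, E3 p := by
      rw [integral_add i1 hE3int, integral_sub hE2int hE1int]
    linarith [h0, h1]
  -- volume of R
  have hvolR : (volume R).toReal = (2 * r) * (2 * r) := by
    rw [hR_def, ← Icc_prod_Icc, Measure.volume_eq_prod, Measure.prod_prod, Real.volume_Icc,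
      ENNReal.toReal_mul, ENNReal.toReal_ofReal (by linarith)]
    ring_nf
  have hvolR16 : (volume R).toReal ≤ 16 := by rw [hvolR]; nlinarith
  have hvolR0 : 0 ≤ (volume R).toReal := ENNReal.toReal_nonneg
  -- bound on ∫ E2
  have hE2bound : (∫ p in R, E2 p) ≤ 2 * lam ^ 2 * 16 := by
    have hconst : IntegrableOn (fun _ : ℝ × ℝ => 2 * lam ^ 2) R volume :=
      (integrableOn_const_iff).mpr (Or.inr (by rw [hR_def]; exact measure_Icc_lt_top))
    have hae : E2 ≤ᵐ[volume.restrict R] fun _ => 2 * lam ^ 2 := by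
      refine (ae_restrict_of_ae hV).mono fun p hp => ?_
      have h1 := hθ0 p; have h2 := hθ1 p
      show (θ p * θ p) * V p ≤ 2 * lam ^ 2
      have hθθ : θ p * θ p ≤ 1 := by nlinarith
      calc (θ p * θ p) * V p ≤ 1 * V p := mul_le_mul_of_nonneg_right hθθ hp.1
        _ = V p := one_mul _
        _ ≤ 2 * lam ^ 2 := hp.2
    have h3 := integral_mono_ae hE2int hconst hae
    rw [setIntegral_const, smul_eq_mul] at h3
    have h9 : (0:ℝ) ≤ 2 * lam ^ 2 := by positivity
    calc (∫ p in R, E2 p) ≤ (volume R).toReal * (2 * lam ^ 2) := h3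
      _ ≤ 16 * (2 * lam ^ 2) := mul_le_mul_of_nonneg_right hvolR16 h9
      _ = 2 * lam ^ 2 * 16 := by ring
  -- bound on ∫ E3
  have hE3bound : (∫ p in R, E3 p) ≤ (1/2) * (∫ p in R, E1 p) + 2 * ∫ p in R, E4 p := by
    have hpt : ∀ p ∈ R, E3 p ≤ (1/2) * E1 p + 2 * E4 p := by
      intro p _
      show 2 * θ p * (θx p * P p + θy p * Q2 p) ≤
        (1/2) * ((θ p * θ p) * (P p ^ 2 + Q2 p ^ 2)) + 2 * (θx p ^ 2 + θy p ^ 2)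
      nlinarith [sq_nonneg (θ p * P p - 2 * θx p), sq_nonneg (θ p * Q2 p - 2 * θy p)]
    have i2 : IntegrableOn (fun p => (1/2) * E1 p) R volume := hE1int.const_mul _
    have i3 : IntegrableOn (fun p => (2:ℝ) * E4 p) R volume := hE4int.const_mul _
    have h4 := setIntegral_mono_on (g := fun p => (1/2) * E1 p + 2 * E4 p)
      hE3int (i2.add i3) hRmeas hpt
    have h5 : (∫ p in R, ((1/2) * E1 p + 2 * E4 p)) =
        (1/2) * (∫ p in R, E1 p) + 2 * ∫ p in R, E4 p := by
      rw [integral_add i2 i3, integral_const_mul, integral_const_mul]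
    linarith
  -- bound on ∫ E4
  have hE4bound : (∫ p in R, E4 p) ≤ 8 * M ^ 2 * s ^ 2 * 16 := by
    have hconst : IntegrableOn (fun _ : ℝ × ℝ => 8 * M ^ 2 * s ^ 2) R volume :=
      (integrableOn_const_iff).mpr (Or.inr (by rw [hR_def]; exact measure_Icc_lt_top))
    have hpt : ∀ p ∈ R, E4 p ≤ 8 * M ^ 2 * s ^ 2 := by
      intro p _
      obtain ⟨ha1, hb1⟩ := abs_le.mp (hθxb p)
      obtain ⟨ha2, hb2⟩ := abs_le.mp (hθyb p)
      have h1 : θx p ^ 2 ≤ (2 * M * s) ^ 2 := sq_le_sq' ha1 hb1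
      have h2 : θy p ^ 2 ≤ (2 * M * s) ^ 2 := sq_le_sq' ha2 hb2
      show θx p ^ 2 + θy p ^ 2 ≤ 8 * M ^ 2 * s ^ 2
      calc θx p ^ 2 + θy p ^ 2 ≤ (2 * M * s) ^ 2 + (2 * M * s) ^ 2 := add_le_add h1 h2
        _ = 8 * M ^ 2 * s ^ 2 := by ring
    have h5 := setIntegral_mono_on hE4int hconst hRmeas hpt
    rw [setIntegral_const, smul_eq_mul] at h5
    have h8 : (0:ℝ) ≤ 8 * M ^ 2 * s ^ 2 := by positivity
    calc (∫ p in R, E4 p) ≤ (volume R).toReal * (8 * M ^ 2 * s ^ 2) := h5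
      _ ≤ 16 * (8 * M ^ 2 * s ^ 2) := mul_le_mul_of_nonneg_right hvolR16 h8
      _ = 8 * M ^ 2 * s ^ 2 * 16 := by ring
  -- combine
  have hM2 : 1 ≤ M ^ 2 := one_le_pow₀ hM1
  have hs_le : s ≤ 8 * lam := by rw [hs_def]; linarith
  have hE4bound2 : (∫ p in R, E4 p) ≤ 8192 * M ^ 2 * lam ^ 2 := by
    have hs2 : s ^ 2 ≤ (8 * lam) ^ 2 := sq_le_sq' (by linarith) hs_le
    have : 8 * M ^ 2 * s ^ 2 * 16 ≤ 8192 * M ^ 2 * lam ^ 2 := by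
      calc 8 * M ^ 2 * s ^ 2 * 16 = (128 * M ^ 2) * s ^ 2 := by ring
        _ ≤ (128 * M ^ 2) * (8 * lam) ^ 2 :=
            mul_le_mul_of_nonneg_left hs2 (by positivity)
        _ = 8192 * M ^ 2 * lam ^ 2 := by ring
    linarith
  have hcomb : (∫ p in R, E1 p) ≤ 40000 * M ^ 2 * lam ^ 2 := by
    have key : (∫ p in R, E1 p) ≤ 64 * lam ^ 2 + 32768 * M ^ 2 * lam ^ 2 := by linarith
    have hprod : lam ^ 2 ≤ M ^ 2 * lam ^ 2 := le_mul_of_one_le_left (sq_nonneg lam) hM2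
    have h0 : (0:ℝ) ≤ M ^ 2 * lam ^ 2 := by positivity
    have : 64 * lam ^ 2 + 32768 * M ^ 2 * lam ^ 2 ≤ 40000 * M ^ 2 * lam ^ 2 := by linarith
    linarith
  -- pass to the smaller square
  have hd_le_r : 1 + 3 / (4 * Flam) ≤ r := by
    have h12 : (3:ℝ) / (4 * Flam) = 12 / (16 * Flam) := by
      rw [div_eq_div_iff (by positivity) (by positivity)]; ring
    have h15 : (12:ℝ) / (16 * Flam) ≤ 15 / (16 * Flam) := by
      gcongr
      norm_num
    rw [hr_def]; linarith
  have hQd_sub_R : Qsq (1 + 3 / (4 * Flam)) ⊆ R := by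
    rw [hR_def, ← Icc_prod_Icc, Qsq]
    exact prod_mono (Icc_subset_Icc (by linarith) (by linarith))
      (Icc_subset_Icc (by linarith) (by linarith))
  have hQd_sub_U : Qsq (1 + 3 / (4 * Flam)) ⊆ U := hQd_sub_R.trans hRU
  have hQdmeas : MeasurableSet (Qsq (1 + 3 / (4 * Flam))) :=
    measurableSet_Icc.prod measurableSet_Icc
  have hθ_one : ∀ p ∈ Qsq (1 + 3 / (4 * Flam)), θ p = 1 := by
    intro p hp
    have habs1 : |p.1| ≤ 1 + 6 / s := by
      rw [← hone]; exact abs_le.mpr ⟨hp.1.1, hp.1.2⟩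
    have habs2 : |p.2| ≤ 1 + 6 / s := by
      rw [← hone]; exact abs_le.mpr ⟨hp.2.1, hp.2.2⟩
    show cut s p.1 * cut s p.2 = 1
    rw [cut_eq_one hs0 habs1, cut_eq_one hs0 habs2, mul_one]
  calc ∫ p in Qsq (1 + 3 / (4 * Flam)), (pdx Φ p ^ 2 + pdy Φ p ^ 2)
      = ∫ p in Qsq (1 + 3 / (4 * Flam)), E1 p := by
        refine setIntegral_congr_fun hQdmeas fun p hp => ?_
        rw [hpdx p (hQd_sub_U hp), hpdy p (hQd_sub_U hp)]
        show P p ^ 2 + Q2 p ^ 2 = (θ p * θ p) * (P p ^ 2 + Q2 p ^ 2)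
        rw [hθ_one p hp]; ring
    _ ≤ ∫ p in R, E1 p := by
        refine setIntegral_mono_set hE1int ?_ (HasSubset.Subset.eventuallyLE hQd_sub_R)
        refine Filter.Eventually.of_forall fun p => ?_
        show 0 ≤ (θ p * θ p) * (P p ^ 2 + Q2 p ^ 2)
        exact mul_nonneg (mul_self_nonneg _) (by positivity)
    _ ≤ 40000 * M ^ 2 * lam ^ 2 := hcomb
    _ = 40000 * M ^ 2 * lam ^ 2 := rfl
end

section
/- Let R_δ = [iδ, iδ + (3/2)δ] × [0,1] ⊂ ℂ and define the Cauchy-Pompeiu operator T_{R_δ}(F)(z) = π⁻¹ ∫_{R_δ} F(ξ)/(z − ξ) dA(ξ). Then there is an absolute constant C₁ such that for every bounded measurable F on R_δ, ‖T_{R_δ}(F)‖_{L^∞(R_δ)} ≤ C₁ δ log(1/δ) ‖F‖_{L^∞(R_δ)}. -/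
open MeasureTheory
open scoped ENNReal NNReal

/-- The thin rectangle `R_δ = [iδ, iδ + (3/2)δ] × [0,1]` in `ℂ`. -/
def thinRect (δ : ℝ) (i : ℕ) : Set ℂ :=
  {ξ : ℂ | ξ.re ∈ Set.Icc (i * δ) (i * δ + (3 / 2) * δ) ∧ ξ.im ∈ Set.Icc 0 1}

/-- The Cauchy–Pompeiu operator on `R_δ`. -/
noncomputable def cauchyPompeiu (δ : ℝ) (i : ℕ) (F : ℂ → ℂ) (z : ℂ) : ℂ :=
  (Real.pi : ℂ)⁻¹ * ∫ ξ in thinRect δ i, F ξ / (z - ξ) ∂volume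

lemma core_rpow_lintegral {p w : ℝ} (hp0 : 0 < p) (hp1 : p < 1) (hw : 0 ≤ w) :
    ∫⁻ t in Set.Icc 0 w, ENNReal.ofReal (|t| ^ (-p)) ≤ ENNReal.ofReal (w ^ (1 - p) / (1 - p)) := by
  rw [← setLIntegral_congr (Ioc_ae_eq_Icc (μ := volume) (a := (0:ℝ)) (b := w))]
  have hcg : ∀ᵐ t ∂volume, t ∈ Set.Ioc (0:ℝ) w →
      ENNReal.ofReal (|t| ^ (-p)) = ENNReal.ofReal (t ^ (-p)) :=
    Filter.Eventually.of_forall (fun t ht => by rw [abs_of_pos ht.1])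
  rw [setLIntegral_congr_fun_ae measurableSet_Ioc hcg]
  have hint : IntegrableOn (fun t : ℝ => t ^ (-p)) (Set.Ioc 0 w) := by
    rw [← intervalIntegrable_iff_integrableOn_Ioc_of_le hw]
    exact intervalIntegral.intervalIntegrable_rpow' (by linarith)
  have hnn : 0 ≤ᵐ[volume.restrict (Set.Ioc 0 w)] fun t : ℝ => t ^ (-p) := by
    rw [Filter.EventuallyLE, ae_restrict_iff' measurableSet_Ioc]
    exact Filter.Eventually.of_forall fun t ht => Real.rpow_nonneg ht.1.le _
  rw [← ofReal_integral_eq_lintegral_ofReal hint hnn]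
  apply ENNReal.ofReal_le_ofReal
  rw [← intervalIntegral.integral_of_le hw, integral_rpow (Or.inl (by linarith))]
  rw [Real.zero_rpow (by linarith : -p + 1 ≠ 0)]
  rw [show -p + 1 = 1 - p by ring, sub_zero]

lemma abs_rpow_lintegral {p w : ℝ} (hp0 : 0 < p) (hp1 : p < 1) (hw : 0 ≤ w) :
    ∫⁻ t in Set.Icc (-w) w, ENNReal.ofReal (|t| ^ (-p))
      ≤ ENNReal.ofReal (2 * (w ^ (1 - p) / (1 - p))) := by
  have hmeas : Measurable fun t : ℝ => ENNReal.ofReal (|t| ^ (-p)) := by fun_prop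
  have hsub : Set.Icc (-w) w ⊆ Set.Icc (-w) 0 ∪ Set.Icc 0 w := by
    intro x hx
    rcases le_total x 0 with h | h
    · exact Or.inl ⟨hx.1, h⟩
    · exact Or.inr ⟨h, hx.2⟩
  calc ∫⁻ t in Set.Icc (-w) w, ENNReal.ofReal (|t| ^ (-p))
      ≤ ∫⁻ t in Set.Icc (-w) 0 ∪ Set.Icc 0 w, ENNReal.ofReal (|t| ^ (-p)) :=
        lintegral_mono_set hsub
    _ ≤ (∫⁻ t in Set.Icc (-w) 0, ENNReal.ofReal (|t| ^ (-p)))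
        + ∫⁻ t in Set.Icc 0 w, ENNReal.ofReal (|t| ^ (-p)) := lintegral_union_le _ _ _
    _ ≤ ENNReal.ofReal (w ^ (1 - p) / (1 - p)) + ENNReal.ofReal (w ^ (1 - p) / (1 - p)) := by
        gcongr
        · have hpre : Set.Icc (-w) 0 = Neg.neg ⁻¹' Set.Icc (0:ℝ) w := by
            ext x; simp [neg_le, le_neg]
          have hcomp := (Measure.measurePreserving_neg (volume : Measure ℝ)).setLIntegral_comp_preimage
            (measurableSet_Icc (a := (0:ℝ)) (b := w)) hmeas
          rw [hpre]
          calc ∫⁻ t in Neg.neg ⁻¹' Set.Icc (0:ℝ) w, ENNReal.ofReal (|t| ^ (-p))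
              = ∫⁻ t in Set.Icc (0:ℝ) w, ENNReal.ofReal (|t| ^ (-p)) := by
                rw [← hcomp]; simp [abs_neg]
            _ ≤ _ := core_rpow_lintegral hp0 hp1 hw
        · exact core_rpow_lintegral hp0 hp1 hw
    _ = ENNReal.ofReal (2 * (w ^ (1 - p) / (1 - p))) := by
        rw [← ENNReal.ofReal_add (div_nonneg (Real.rpow_nonneg hw _) (by linarith)) (div_nonneg (Real.rpow_nonneg hw _) (by linarith)), two_mul]

lemma shift_rpow_lintegral {p c d a : ℝ} (hp0 : 0 < p) (hp1 : p < 1) (ha : a ∈ Set.Icc c d) :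
    ∫⁻ x in Set.Icc c d, ENNReal.ofReal (|x - a| ^ (-p))
      ≤ ENNReal.ofReal (2 * ((d - c) ^ (1 - p) / (1 - p))) := by
  have hmeas : Measurable fun t : ℝ => ENNReal.ofReal (|t| ^ (-p)) := by fun_prop
  have hpre : Set.Icc c d = (fun x : ℝ => x + -a) ⁻¹' Set.Icc (c - a) (d - a) := by
    ext x; simp [sub_eq_add_neg]
  have hcomp := (measurePreserving_add_right (volume : Measure ℝ) (-a)).setLIntegral_comp_preimage
    (measurableSet_Icc (a := c - a) (b := d - a)) hmeas
  calc ∫⁻ x in Set.Icc c d, ENNReal.ofReal (|x - a| ^ (-p))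
      = ∫⁻ x in Set.Icc (c - a) (d - a), ENNReal.ofReal (|x| ^ (-p)) := by
        rw [hpre, ← hcomp]; simp [sub_eq_add_neg]
    _ ≤ ∫⁻ x in Set.Icc (-(d - c)) (d - c), ENNReal.ofReal (|x| ^ (-p)) := by
        apply lintegral_mono_set
        apply Set.Icc_subset_Icc <;> linarith [ha.1, ha.2]
    _ ≤ _ := abs_rpow_lintegral hp0 hp1 (by linarith [ha.1, ha.2])

lemma volume_re_eq_zero (a : ℝ) : (volume : Measure ℂ) {ξ : ℂ | ξ.re = a} = 0 := by
  have h := Complex.volume_preserving_equiv_real_prod.measure_preimage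
    (s := {a} ×ˢ (Set.univ : Set ℝ))
    (((measurableSet_singleton a).prod MeasurableSet.univ).nullMeasurableSet)
  have hs : Complex.measurableEquivRealProd ⁻¹' ({a} ×ˢ (Set.univ : Set ℝ))
      = {ξ : ℂ | ξ.re = a} := by
    ext ξ; simp [Complex.measurableEquivRealProd_apply, eq_comm]
  rw [hs] at h
  rw [h, Measure.volume_eq_prod, Measure.prod_prod, Real.volume_singleton, zero_mul]

lemma volume_im_eq_zero (b : ℝ) : (volume : Measure ℂ) {ξ : ℂ | ξ.im = b} = 0 := by
  have h := Complex.volume_preserving_equiv_real_prod.measure_preimage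
    (s := (Set.univ : Set ℝ) ×ˢ {b})
    ((MeasurableSet.univ.prod (measurableSet_singleton b)).nullMeasurableSet)
  have hs : Complex.measurableEquivRealProd ⁻¹' ((Set.univ : Set ℝ) ×ˢ {b})
      = {ξ : ℂ | ξ.im = b} := by
    ext ξ; simp [Complex.measurableEquivRealProd_apply, eq_comm]
  rw [hs] at h
  rw [h, Measure.volume_eq_prod, Measure.prod_prod, Real.volume_singleton, mul_zero]

theorem cauchyPompeiu_sup_bound :
    ∃ C₁ : ℝ, 0 < C₁ ∧
      ∀ (δ : ℝ), 0 < δ → δ < 1 / 2 → ∀ (i : ℕ), ∀ (F : ℂ → ℂ) (M : ℝ),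
        Measurable F → (∀ ξ ∈ thinRect δ i, ‖F ξ‖ ≤ M) →
        ∀ z ∈ thinRect δ i,
          ‖cauchyPompeiu δ i F z‖ ≤ C₁ * δ * Real.log (1 / δ) * M := by
  refine ⟨96, by norm_num, ?_⟩
  intro δ hδ0 hδ2 i F M hFmeas hFM z hz
  have hRmeas : MeasurableSet (thinRect δ i) :=
    (measurableSet_Icc.preimage Complex.measurable_re).inter
      (measurableSet_Icc.preimage Complex.measurable_im)
  set a := z.re with ha
  set b := z.im with hb
  set L := Real.log (1 / δ) with hLdef
  have h9 := Real.log_two_gt_d9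
  have hL : 2 / 3 < L := by
    have h2 : (2:ℝ) < 1 / δ := by rw [lt_div_iff₀ hδ0]; linarith
    have := Real.log_lt_log (by norm_num : (0:ℝ) < 2) h2
    linarith
  have hL0 : 0 < L := by linarith
  set α := 1 / (2 * L) with hαdef
  have hα0 : 0 < α := by positivity
  have hα34 : α ≤ 3 / 4 := by
    rw [hαdef, div_le_div_iff₀ (by positivity) (by norm_num)]
    linarith
  have hα1 : α < 1 := by linarith
  have hM0 : 0 ≤ M := by
    have hmem : (⟨i * δ, 0⟩ : ℂ) ∈ thinRect δ i := by
      refine ⟨⟨le_refl _, ?_⟩, by norm_num⟩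
      simp only [Complex.ofReal_mul]
      linarith
    exact (norm_nonneg _).trans (hFM _ hmem)
  -- a.e. pointwise bound
  have hae_re : ∀ᵐ ξ : ℂ ∂volume, ξ.re ≠ a := by
    rw [ae_iff]; simpa using volume_re_eq_zero a
  have hae_im : ∀ᵐ ξ : ℂ ∂volume, ξ.im ≠ b := by
    rw [ae_iff]; simpa using volume_im_eq_zero b
  have hptwise : ∀ᵐ ξ ∂(volume.restrict (thinRect δ i)),
      (‖F ξ / (z - ξ)‖₊ : ℝ≥0∞) ≤
        ENNReal.ofReal M *
          (ENNReal.ofReal (|ξ.re - a| ^ (-α)) * ENNReal.ofReal (|ξ.im - b| ^ (-(1 - α)))) := by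
    filter_upwards [ae_restrict_of_ae hae_re, ae_restrict_of_ae hae_im, ae_restrict_mem hRmeas]
      with ξ h1 h2 h3
    have hr : 0 < |ξ.re - a| := abs_pos.2 (sub_ne_zero.2 h1)
    have hs : 0 < |ξ.im - b| := abs_pos.2 (sub_ne_zero.2 h2)
    have hn : 0 < ‖z - ξ‖ := by
      rw [norm_pos_iff]
      intro h0
      rw [sub_eq_zero] at h0
      exact h1 (by rw [← h0])
    have hrn : |ξ.re - a| ≤ ‖z - ξ‖ := by
      calc |ξ.re - a| = |(z - ξ).re| := by rw [Complex.sub_re, abs_sub_comm]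
        _ ≤ ‖z - ξ‖ := by exact Complex.abs_re_le_norm _
    have hsn : |ξ.im - b| ≤ ‖z - ξ‖ := by
      calc |ξ.im - b| = |(z - ξ).im| := by rw [Complex.sub_im, abs_sub_comm]
        _ ≤ ‖z - ξ‖ := by exact Complex.abs_im_le_norm _
    have hkey : |ξ.re - a| ^ α * |ξ.im - b| ^ (1 - α) ≤ ‖z - ξ‖ := by
      calc |ξ.re - a| ^ α * |ξ.im - b| ^ (1 - α)
          ≤ ‖z - ξ‖ ^ α * ‖z - ξ‖ ^ (1 - α) :=
            mul_le_mul (Real.rpow_le_rpow hr.le hrn hα0.le)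
              (Real.rpow_le_rpow hs.le hsn (by linarith)) (Real.rpow_nonneg hs.le _)
              (Real.rpow_nonneg hn.le _)
        _ = ‖z - ξ‖ := by rw [← Real.rpow_add hn]; norm_num
    have hinv : ‖z - ξ‖⁻¹ ≤ |ξ.re - a| ^ (-α) * |ξ.im - b| ^ (-(1 - α)) := by
      have h := inv_anti₀ (by positivity) hkey
      rwa [mul_inv, ← Real.rpow_neg hr.le, ← Real.rpow_neg hs.le] at h
    have hnorm : ‖F ξ / (z - ξ)‖ ≤ M * (|ξ.re - a| ^ (-α) * |ξ.im - b| ^ (-(1 - α))) := by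
      rw [norm_div, div_eq_mul_inv]
      exact mul_le_mul (hFM ξ h3) hinv (by positivity) hM0
    calc (‖F ξ / (z - ξ)‖₊ : ℝ≥0∞) = ENNReal.ofReal ‖F ξ / (z - ξ)‖ :=
          (ofReal_norm _).symm
      _ ≤ ENNReal.ofReal (M * (|ξ.re - a| ^ (-α) * |ξ.im - b| ^ (-(1 - α)))) :=
          ENNReal.ofReal_le_ofReal hnorm
      _ = _ := by
          rw [ENNReal.ofReal_mul hM0, ENNReal.ofReal_mul (Real.rpow_nonneg hr.le _)]
  -- transfer to product
  have htrans : (∫⁻ ξ in thinRect δ i,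
        ENNReal.ofReal (|ξ.re - a| ^ (-α)) * ENNReal.ofReal (|ξ.im - b| ^ (-(1 - α))) ∂volume)
      = (∫⁻ x in Set.Icc ((i:ℝ) * δ) (i * δ + 3 / 2 * δ), ENNReal.ofReal (|x - a| ^ (-α))) *
        ∫⁻ y in Set.Icc (0:ℝ) 1, ENNReal.ofReal (|y - b| ^ (-(1 - α))) := by
    have hmeasf : Measurable fun ξ : ℂ =>
        ENNReal.ofReal (|ξ.re - a| ^ (-α)) * ENNReal.ofReal (|ξ.im - b| ^ (-(1 - α))) := by
      fun_prop
    have hcomp := (Complex.volume_preserving_equiv_real_prod.symm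
        Complex.measurableEquivRealProd).setLIntegral_comp_preimage hRmeas hmeasf
    have hpre : Complex.measurableEquivRealProd.symm ⁻¹' thinRect δ i
        = (Set.Icc ((i:ℝ) * δ) (i * δ + 3 / 2 * δ)) ×ˢ (Set.Icc (0:ℝ) 1) := by
      ext p
      simp [thinRect, Complex.measurableEquivRealProd_symm_apply, Set.mem_prod, Prod.le_def]
      tauto
    rw [← hcomp, hpre, Measure.volume_eq_prod, ← Measure.prod_restrict,
      ← lintegral_prod_mul (by fun_prop) (by fun_prop)]
    rfl
  -- the main lintegral estimate
  have hABle : ENNReal.ofReal M *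
      (ENNReal.ofReal (2 * ((3 / 2 * δ) ^ (1 - α) / (1 - α))) *
        ENNReal.ofReal (2 * ((1:ℝ) ^ (1 - (1 - α)) / (1 - (1 - α)))))
      ≤ ENNReal.ofReal (96 * δ * L * M) := by
    have hA0 : 0 ≤ 2 * ((3 / 2 * δ) ^ (1 - α) / (1 - α)) := by
      have := Real.rpow_nonneg (by linarith : (0:ℝ) ≤ 3 / 2 * δ) (1 - α)
      have h1α : (0:ℝ) < 1 - α := by linarith
      positivity
    rw [← ENNReal.ofReal_mul hA0, ← ENNReal.ofReal_mul hM0]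
    apply ENNReal.ofReal_le_ofReal
    -- real arithmetic
    have hB : 2 * ((1:ℝ) ^ (1 - (1 - α)) / (1 - (1 - α))) = 4 * L := by
      rw [show (1:ℝ) - (1 - α) = α by ring, Real.one_rpow, hαdef]
      field_simp
      ring
    have hδα : δ ^ (-α) ≤ 2 := by
      rw [Real.rpow_def_of_pos hδ0]
      have hlogδ : Real.log δ = -L := by
        rw [hLdef, one_div, Real.log_inv]; ring
      have : Real.log δ * (-α) = 1 / 2 := by
        rw [hlogδ, hαdef]; field_simp
      rw [this]
      have hhalf : (1:ℝ) / 2 < Real.log 2 :=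
        lt_of_lt_of_le (by norm_num) Real.log_two_gt_d9.le
      have : Real.exp (1 / 2) < 2 := (Real.lt_log_iff_exp_lt (by norm_num)).1 hhalf
      linarith
    have hpow : (3 / 2 * δ) ^ (1 - α) ≤ 3 * δ := by
      rw [Real.mul_rpow (by norm_num) hδ0.le]
      have h32 : (3 / 2 : ℝ) ^ (1 - α) ≤ 3 / 2 := by
        calc (3 / 2 : ℝ) ^ (1 - α) ≤ (3 / 2 : ℝ) ^ (1:ℝ) :=
              Real.rpow_le_rpow_of_exponent_le (by norm_num) (by linarith)
          _ = 3 / 2 := Real.rpow_one _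
      have hδ1α : δ ^ (1 - α) ≤ 2 * δ := by
        calc δ ^ (1 - α) = δ ^ (1:ℝ) * δ ^ (-α) := by
              rw [← Real.rpow_add hδ0]; ring_nf
          _ = δ * δ ^ (-α) := by rw [Real.rpow_one]
          _ ≤ δ * 2 := by
              apply mul_le_mul_of_nonneg_left hδα hδ0.le
          _ = 2 * δ := by ring
      calc (3 / 2 : ℝ) ^ (1 - α) * δ ^ (1 - α) ≤ 3 / 2 * (2 * δ) :=
            mul_le_mul h32 hδ1α (Real.rpow_nonneg hδ0.le _) (by norm_num)
        _ = 3 * δ := by ring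
    have hinv4 : (1 - α)⁻¹ ≤ 4 := by
      have h14 : (1/4 : ℝ) ≤ 1 - α := by linarith
      calc (1 - α)⁻¹ ≤ (1/4 : ℝ)⁻¹ := inv_anti₀ (by norm_num) h14
        _ = 4 := by norm_num
    have hA : 2 * ((3 / 2 * δ) ^ (1 - α) / (1 - α)) ≤ 24 * δ := by
      have : (3 / 2 * δ) ^ (1 - α) / (1 - α) ≤ 3 * δ * 4 := by
        rw [div_eq_mul_inv]
        exact mul_le_mul hpow hinv4 (inv_nonneg.2 (by linarith)) (by linarith)
      linarith
    calc M * (2 * ((3 / 2 * δ) ^ (1 - α) / (1 - α)) *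
          (2 * ((1:ℝ) ^ (1 - (1 - α)) / (1 - (1 - α)))))
        ≤ M * (24 * δ * (4 * L)) := by
          rw [hB]
          apply mul_le_mul_of_nonneg_left _ hM0
          apply mul_le_mul_of_nonneg_right hA (by linarith)
      _ = 96 * δ * L * M := by ring
  have hkey : (∫⁻ ξ in thinRect δ i, (‖F ξ / (z - ξ)‖₊ : ℝ≥0∞) ∂volume)
      ≤ ENNReal.ofReal (96 * δ * L * M) := by
    calc (∫⁻ ξ in thinRect δ i, (‖F ξ / (z - ξ)‖₊ : ℝ≥0∞) ∂volume)
        ≤ ∫⁻ ξ in thinRect δ i, ENNReal.ofReal M *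
            (ENNReal.ofReal (|ξ.re - a| ^ (-α)) *
              ENNReal.ofReal (|ξ.im - b| ^ (-(1 - α)))) ∂volume := lintegral_mono_ae hptwise
      _ = ENNReal.ofReal M * ∫⁻ ξ in thinRect δ i,
            ENNReal.ofReal (|ξ.re - a| ^ (-α)) *
              ENNReal.ofReal (|ξ.im - b| ^ (-(1 - α))) ∂volume :=
          lintegral_const_mul' _ _ ENNReal.ofReal_ne_top
      _ ≤ ENNReal.ofReal M *
            (ENNReal.ofReal (2 * ((3 / 2 * δ) ^ (1 - α) / (1 - α))) *
              ENNReal.ofReal (2 * ((1:ℝ) ^ (1 - (1 - α)) / (1 - (1 - α))))) := by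
          rw [htrans]
          gcongr
          · have hmem : a ∈ Set.Icc ((i:ℝ) * δ) (i * δ + 3 / 2 * δ) := hz.1
            have := shift_rpow_lintegral hα0 hα1 hmem
            simpa [show (i:ℝ) * δ + 3 / 2 * δ - i * δ = 3 / 2 * δ by ring] using this
          · have hmem : b ∈ Set.Icc (0:ℝ) 1 := hz.2
            have := shift_rpow_lintegral (by linarith : (0:ℝ) < 1 - α)
              (by linarith : 1 - α < 1) hmem
            simpa using this
      _ ≤ ENNReal.ofReal (96 * δ * L * M) := hABle
  -- conclude
  have h1 := norm_integral_le_lintegral_norm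
    (μ := volume.restrict (thinRect δ i)) (fun ξ => F ξ / (z - ξ))
  simp_rw [ofReal_norm, enorm_eq_nnnorm] at h1
  have hbd0 : 0 ≤ 96 * δ * L * M := by positivity
  have h2 : (∫⁻ ξ in thinRect δ i, (‖F ξ / (z - ξ)‖₊ : ℝ≥0∞) ∂volume).toReal
      ≤ 96 * δ * L * M := ENNReal.toReal_le_of_le_ofReal hbd0 hkey
  rw [cauchyPompeiu, norm_mul]
  have hπ : ‖((Real.pi : ℝ) : ℂ)⁻¹‖ ≤ 1 := by
    rw [norm_inv]
    apply inv_le_one_of_one_le₀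
    rw [Complex.norm_real, Real.norm_eq_abs, abs_of_pos Real.pi_pos]
    linarith [Real.pi_gt_three]
  calc ‖((Real.pi : ℝ) : ℂ)⁻¹‖ * ‖∫ ξ in thinRect δ i, F ξ / (z - ξ) ∂volume‖
      ≤ 1 * (96 * δ * L * M) := mul_le_mul hπ (h1.trans h2) (norm_nonneg _) zero_le_one
    _ = 96 * δ * L * M := one_mul _
end
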